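/- Let ψ′(0+) > −∞, suppose W is continuously differentiable on (0,∞), let f : ℝ → ℝ be continuously differentiable, set f̃(x) = f(x) + C_U q x, and for a < b let Λ(a,b) = C_D + C_U + φ_a(b; f̃′). Define v_{a,b}(x) = (Λ(a,b)/(q W(b−a))) Z(x−a) − C_U R(x−a) + (f(a)/q) Z(x−a) − φ_a(x; f) for x ≤ b. Then v_{a,b} is differentiable on (a,b) with v_{a,b}′(x) = Λ(a,b) W(x−a)/W(b−a) − C_U − φ_a(x; f̃′) for all a < x < b; in particular v_{a,b}′(b−) = C_D and v_{a,b}′(a+) = Λ(a,b) W(0)/W(b−a) − C_U. -/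

import Mathlib

open MeasureTheory Set Filter Topology

noncomputable section

/-- The Laplace exponent of a spectrally negative Lévy process with data `(γ, σ, ν)`. -/
def psi (γ σ : ℝ) (ν : Measure ℝ) (s : ℝ) : ℝ :=
  γ * s + σ ^ 2 * s ^ 2 / 2 +
    ∫ z in Set.Iio (0 : ℝ), (Real.exp (s * z) - 1 - s * z * (if -1 < z then (1:ℝ) else 0)) ∂ν

/-- `Φ(q) = sup {λ ≥ 0 : ψ(λ) = q}`. -/
def PhiQ (γ σ : ℝ) (ν : Measure ℝ) (q : ℝ) : ℝ :=
  sSup {l : ℝ | 0 ≤ l ∧ psi γ σ ν l = q}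

/-- `Z^{(q)}(x) = 1 + q ∫₀ˣ W(y) dy`. -/
def Zfun (q : ℝ) (W : ℝ → ℝ) (x : ℝ) : ℝ := 1 + q * ∫ y in (0:ℝ)..x, W y

/-- `Z̄^{(q)}(x) = ∫₀ˣ Z(z) dz`. -/
def Zbar (q : ℝ) (W : ℝ → ℝ) (x : ℝ) : ℝ := ∫ z in (0:ℝ)..x, Zfun q W z

/-- `R^{(q)}(x) = Z̄(x) + ψ'(0+)/q`. -/
def Rfun (q psi'0 : ℝ) (W : ℝ → ℝ) (x : ℝ) : ℝ := Zbar q W x + psi'0 / q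

/-- `Ψ(s; h) = ∫_s^∞ e^{-Φ(q)(y-s)} h(y) dy`. -/
def PsiInt (Φq s : ℝ) (h : ℝ → ℝ) : ℝ := ∫ y in Set.Ioi s, Real.exp (-Φq * (y - s)) * h y

/-- `φ_s(x; h) = ∫_s^x W(x-y) h(y) dy`. -/
def phiInt (W : ℝ → ℝ) (s x : ℝ) (h : ℝ → ℝ) : ℝ := ∫ y in s..x, W (x - y) * h y

/-- Integrand of the nonlocal part of the generator `L`. -/
def genInt (h : ℝ → ℝ) (x z : ℝ) : ℝ :=
  h (x + z) - h x - deriv h x * z * (if -1 < z then (1:ℝ) else 0)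

/-- The generator `L` of the Lévy process, applied to a sufficiently smooth function. -/
def Lgen (γ σ : ℝ) (ν : Measure ℝ) (h : ℝ → ℝ) (x : ℝ) : ℝ :=
  γ * deriv h x + σ ^ 2 / 2 * deriv (deriv h) x + ∫ z in Set.Iio (0 : ℝ), genInt h x z ∂ν

/-- `Λ(a,b) = C_D + C_U + φ_a(b; f̃')` where `f̃(x) = f(x) + C_U q x`. -/
def Lam3 (q C_U C_D : ℝ) (W f : ℝ → ℝ) (a b : ℝ) : ℝ :=
  C_D + C_U + phiInt W a b (fun y => deriv f y + C_U * q)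

/-- `v_{a,b}(x) = (Λ(a,b)/(q W(b−a))) Z(x−a) − C_U R(x−a) + (f(a)/q) Z(x−a) − φ_a(x; f)`. -/
def v3 (q psi'0 C_U C_D : ℝ) (W f : ℝ → ℝ) (a b x : ℝ) : ℝ :=
  Lam3 q C_U C_D W f a b / (q * W (b - a)) * Zfun q W (x - a)
    - C_U * Rfun q psi'0 W (x - a) + f a / q * Zfun q W (x - a) - phiInt W a x f

namespace Stmt3Aux

/-- The primitive `K W u = ∫₀ᵘ W`. -/
def K (W : ℝ → ℝ) (u : ℝ) : ℝ := ∫ s in (0:ℝ)..u, W s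

variable {W : ℝ → ℝ}

lemma monoW (h0 : ∀ x, 0 ≤ W x) (hz : ∀ x < 0, W x = 0)
    (hm : StrictMonoOn W (Set.Ici 0)) : Monotone W := by
  intro u v huv
  rcases lt_or_ge u 0 with hu | hu
  · rw [hz u hu]; exact h0 v
  · exact hm.monotoneOn (Set.mem_Ici.2 hu) (Set.mem_Ici.2 (hu.trans huv)) huv

lemma K_cont (hm : Monotone W) : Continuous (K W) :=
  intervalIntegral.continuous_primitive (fun _ _ => hm.intervalIntegrable) 0

lemma K_zero (hz : ∀ x < 0, W x = 0) {u : ℝ} (hu : u ≤ 0) : K W u = 0 := by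
  unfold K
  rw [intervalIntegral.integral_symm u 0, neg_eq_zero,
    intervalIntegral.integral_of_le hu, MeasureTheory.integral_Ioc_eq_integral_Ioo]
  refine (MeasureTheory.setIntegral_congr_fun measurableSet_Ioo
    (g := fun _ => (0:ℝ)) (fun t ht => hz t ht.2)).trans (by simp)

lemma W_contAt (hz : ∀ x < 0, W x = 0) (hc : ContinuousOn W (Set.Ici 0)) {u : ℝ}
    (hu : u ≠ 0) : ContinuousAt W u := by
  rcases hu.lt_or_gt with h | h
  · have he : W =ᶠ[nhds u] fun _ => (0:ℝ) := by
      filter_upwards [Iio_mem_nhds h] with x hx using hz x hx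
    exact he.continuousAt
  · exact hc.continuousAt (Ici_mem_nhds h)

lemma K_hasDeriv (hm : Monotone W) {u : ℝ} (hc : ContinuousAt W u) :
    HasDerivAt (K W) (W u) u :=
  intervalIntegral.integral_hasDerivAt_right hm.intervalIntegrable
    hm.measurable.stronglyMeasurable.stronglyMeasurableAtFilter hc

lemma K_sub_le (hm : Monotone W) (h0 : ∀ x, 0 ≤ W x) {p r c : ℝ}
    (hp : p ≤ c) (hr : r ≤ c) : |K W p - K W r| ≤ W c * |p - r| := by
  have h1 : K W p - K W r = ∫ s in r..p, W s :=
    intervalIntegral.integral_interval_sub_left hm.intervalIntegrable hm.intervalIntegrable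
  rw [h1]
  have h2 := intervalIntegral.norm_integral_le_of_norm_le_const
      (C := W c) (f := W) (a := r) (b := p) ?_
  · simpa [Real.norm_eq_abs, abs_sub_comm p r] using h2
  · intro s hs
    rw [Real.norm_eq_abs, abs_of_nonneg (h0 s)]
    exact hm (hs.2.trans (max_le hr hp))

end Stmt3Aux

theorem stmt3
    (γ σ q : ℝ) (ν : Measure ℝ) (W : ℝ → ℝ)
    (hσ : 0 ≤ σ)
    (hνconc : ν (Set.Ici 0) = 0)
    (hνint : Integrable (fun z => min 1 (z ^ 2)) ν)
    (hψtop : Tendsto (psi γ σ ν) atTop atTop)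
    (hq : 0 < q)
    (hΦpos : 0 < PhiQ γ σ ν q)
    (hWnonneg : ∀ x, 0 ≤ W x)
    (hWzero : ∀ x < 0, W x = 0)
    (hWcont : ContinuousOn W (Set.Ici 0))
    (hWmono : StrictMonoOn W (Set.Ici 0))
    (hWlaplace : ∀ s, PhiQ γ σ ν q < s →
      ∫ x in Set.Ioi (0:ℝ), Real.exp (-s * x) * W x = 1 / (psi γ σ ν s - q))
    (psi'0 : ℝ) (hpsi'0 : HasDerivWithinAt (psi γ σ ν) psi'0 (Set.Ici 0) 0)
    (hW1 : ContDiffOn ℝ 1 W (Set.Ioi 0))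
    (C_U C_D : ℝ) (f : ℝ → ℝ) (hf : ContDiff ℝ 1 f)
    (a b : ℝ) (hab : a < b) :
    (∀ x, a < x → x < b →
      HasDerivAt (v3 q psi'0 C_U C_D W f a b)
        (Lam3 q C_U C_D W f a b * W (x - a) / W (b - a) - C_U
          - phiInt W a x (fun y => deriv f y + C_U * q)) x) ∧
    Tendsto (fun x => Lam3 q C_U C_D W f a b * W (x - a) / W (b - a) - C_U
        - phiInt W a x (fun y => deriv f y + C_U * q)) (𝓝[<] b) (𝓝 C_D) ∧
    Tendsto (fun x => Lam3 q C_U C_D W f a b * W (x - a) / W (b - a) - C_U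
        - phiInt W a x (fun y => deriv f y + C_U * q)) (𝓝[>] a)
      (𝓝 (Lam3 q C_U C_D W f a b * W 0 / W (b - a) - C_U)) := by
  classical
  have hmono : Monotone W := Stmt3Aux.monoW hWnonneg hWzero hWmono
  have hWmeas : Measurable W := hmono.measurable
  have hKcont : Continuous (Stmt3Aux.K W) := Stmt3Aux.K_cont hmono
  have hq0 : q ≠ 0 := hq.ne'
  have hba : (0:ℝ) < b - a := sub_pos.2 hab
  have hWba : 0 < W (b - a) :=
    lt_of_le_of_lt (hWnonneg 0) (hWmono (Set.mem_Ici.2 le_rfl) (Set.mem_Ici.2 hba.le) hba)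
  have hfc : Continuous f := hf.continuous
  have hf' : Continuous (deriv f) := hf.continuous_deriv le_rfl
  have hfd : ∀ t : ℝ, HasDerivAt f (deriv f t) t := fun t =>
    (hf.differentiable one_ne_zero t).hasDerivAt
  have hZcont : Continuous (Zfun q W) := continuous_const.add (continuous_const.mul hKcont)
  have hKshift : ∀ (t x₀ : ℝ), x₀ - t ≠ 0 →
      HasDerivAt (fun x => Stmt3Aux.K W (x - t)) (W (x₀ - t)) x₀ := by
    intro t x₀ h
    have h1 := (Stmt3Aux.K_hasDeriv hmono
        (Stmt3Aux.W_contAt hWzero hWcont h)).comp x₀ ((hasDerivAt_id x₀).sub_const t)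
    simpa [Function.comp_def] using h1
  have hWsii : ∀ (x c d : ℝ), IntervalIntegrable (fun t => W (x - t)) volume c d := by
    intro x c d
    exact (hmono.comp_antitone (fun u v huv => sub_le_sub_left huv x)).intervalIntegrable
  have hcKf : ∀ x : ℝ, Continuous fun t => Stmt3Aux.K W (x - t) * deriv f t := by
    intro x
    exact ((hKcont.comp (continuous_const.sub continuous_id)).mul hf')
  have hne : ∀ x₀ : ℝ, ∀ᵐ t : ℝ, t ≠ x₀ := by
    intro x₀
    rw [MeasureTheory.ae_iff]
    simp only [Ne, not_not, Set.setOf_eq_eq_singleton]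
    exact measure_singleton x₀
  have hballmem : ∀ x₀ : ℝ, ∀ t ∈ Set.uIoc a b, ∀ x ∈ Metric.ball x₀ 1,
      x - t ≤ |x₀| + 1 + |a| + |b| := by
    intro x₀ t ht x hx
    rw [Set.uIoc_of_le hab.le] at ht
    rw [Metric.mem_ball, Real.dist_eq] at hx
    have h1 : x - x₀ < 1 := (abs_lt.1 hx).2
    have h2 : x₀ ≤ |x₀| := le_abs_self x₀
    have h3 : -|a| ≤ a := neg_abs_le a
    have h4 : (0:ℝ) ≤ |b| := abs_nonneg b
    have h5 : a < t := ht.1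
    linarith
  -- integration by parts identity
  have key : ∀ x, a ≤ x → x ≤ b →
      phiInt W a x f = f a * Stmt3Aux.K W (x - a)
        + ∫ t in a..b, Stmt3Aux.K W (x - t) * deriv f t := by
    intro x hax hxb
    have hg'int1 : IntervalIntegrable (fun t => W (x - t) * (-1) * f t) volume a x := by
      have heq : (fun t => W (x - t) * (-1) * f t) = fun t => W (x - t) * (-1 * f t) := by
        funext t; ring
      rw [heq]
      exact (hWsii x a x).mul_continuousOn (continuous_const.mul hfc).continuousOn
    have hg'int2 : IntervalIntegrable (fun t => Stmt3Aux.K W (x - t) * deriv f t) volume a x :=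
      (hcKf x).intervalIntegrable a x
    have hderiv : ∀ t ∈ Set.Ioo a x,
        HasDerivWithinAt (fun t => Stmt3Aux.K W (x - t) * f t)
          (W (x - t) * (-1) * f t + Stmt3Aux.K W (x - t) * deriv f t) (Set.Ioi t) t := by
      intro t ht
      have hxt : x - t ≠ 0 := (sub_pos.2 ht.2).ne'
      have h1 : HasDerivAt (fun t' => Stmt3Aux.K W (x - t')) (W (x - t) * (-1)) t := by
        have h2 := (Stmt3Aux.K_hasDeriv hmono
            (Stmt3Aux.W_contAt hWzero hWcont hxt)).comp t ((hasDerivAt_id t).const_sub x)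
        simpa [Function.comp_def] using h2
      exact (h1.mul (hfd t)).hasDerivWithinAt
    have hparts := intervalIntegral.integral_eq_sub_of_hasDeriv_right_of_le hax
      (f := fun t => Stmt3Aux.K W (x - t) * f t)
      (f' := fun t => W (x - t) * (-1) * f t + Stmt3Aux.K W (x - t) * deriv f t)
      (((hKcont.comp (continuous_const.sub continuous_id)).mul hfc)).continuousOn
      hderiv (hg'int1.add hg'int2)
    have hKx : Stmt3Aux.K W (x - x) = 0 := by
      rw [sub_self]; exact Stmt3Aux.K_zero hWzero le_rfl
    rw [intervalIntegral.integral_add hg'int1 hg'int2] at hparts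
    beta_reduce at hparts
    rw [hKx, zero_mul, zero_sub] at hparts
    have hneg : (∫ t in a..x, W (x - t) * (-1) * f t) = -∫ t in a..x, W (x - t) * f t := by
      rw [show (fun t => W (x - t) * (-1) * f t) = fun t => -(W (x - t) * f t) from
        funext fun t => by ring]
      exact intervalIntegral.integral_neg
    rw [hneg] at hparts
    have htail : (∫ t in a..b, Stmt3Aux.K W (x - t) * deriv f t)
        = ∫ t in a..x, Stmt3Aux.K W (x - t) * deriv f t := by
      have h1 : IntervalIntegrable (fun t => Stmt3Aux.K W (x - t) * deriv f t) volume x b :=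
        (hcKf x).intervalIntegrable x b
      rw [← intervalIntegral.integral_add_adjacent_intervals hg'int2 h1]
      have he : Set.EqOn (fun t => Stmt3Aux.K W (x - t) * deriv f t) (fun _ => (0:ℝ))
          (Set.uIcc x b) := by
        intro t ht
        rw [Set.uIcc_of_le hxb] at ht
        show Stmt3Aux.K W (x - t) * deriv f t = 0
        rw [Stmt3Aux.K_zero hWzero (sub_nonpos.2 ht.1), zero_mul]
      have h0 := intervalIntegral.integral_congr (μ := volume) he
      simp only [intervalIntegral.integral_const, smul_zero] at h0
      rw [h0, add_zero]
    rw [htail]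
    show (∫ y in a..x, W (x - y) * f y) = _
    have hcomm : Stmt3Aux.K W (x - a) * f a = f a * Stmt3Aux.K W (x - a) := mul_comm _ _
    linarith [hparts, hcomm]
  -- derivative of the parametric integral
  have hP : ∀ x₀ : ℝ, HasDerivAt (fun x => ∫ t in a..b, Stmt3Aux.K W (x - t) * deriv f t)
      (∫ t in a..b, W (x₀ - t) * deriv f t) x₀ := by
    intro x₀
    have hc0 : (0:ℝ) ≤ |x₀| + 1 + |a| + |b| := by positivity
    refine (intervalIntegral.hasDerivAt_integral_of_dominated_loc_of_lip (s := Metric.ball x₀ 1)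
      (F := fun x t => Stmt3Aux.K W (x - t) * deriv f t)
      (F' := fun t => W (x₀ - t) * deriv f t)
      (bound := fun t => W (|x₀| + 1 + |a| + |b|) * |deriv f t|)
      (Metric.ball_mem_nhds x₀ one_pos) ?_ ?_ ?_ ?_ ?_ ?_).2
    · exact Eventually.of_forall fun x => (hcKf x).aestronglyMeasurable
    · exact (hcKf x₀).intervalIntegrable a b
    · exact ((hWmeas.comp (measurable_const.sub measurable_id)).mul
        hf'.measurable).aestronglyMeasurable
    · refine Eventually.of_forall fun t ht => ?_
      refine LipschitzOnWith.of_dist_le_mul fun x hx y hy => ?_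
      rw [Real.coe_nnabs, Real.dist_eq, Real.dist_eq,
        abs_of_nonneg (mul_nonneg (hWnonneg _) (abs_nonneg _))]
      have heq : Stmt3Aux.K W (x - t) * deriv f t - Stmt3Aux.K W (y - t) * deriv f t
          = (Stmt3Aux.K W (x - t) - Stmt3Aux.K W (y - t)) * deriv f t := by ring
      rw [heq, abs_mul]
      have hK := Stmt3Aux.K_sub_le hmono hWnonneg
        (hballmem x₀ t ht x hx) (hballmem x₀ t ht y hy)
      have h2 : |(x - t) - (y - t)| = |x - y| := by ring_nf
      rw [h2] at hK
      calc |Stmt3Aux.K W (x - t) - Stmt3Aux.K W (y - t)| * |deriv f t|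
          ≤ (W (|x₀| + 1 + |a| + |b|) * |x - y|) * |deriv f t| :=
            mul_le_mul_of_nonneg_right hK (abs_nonneg _)
        _ = W (|x₀| + 1 + |a| + |b|) * |deriv f t| * |x - y| := by ring
    · exact (continuous_const.mul hf'.abs).intervalIntegrable a b
    · filter_upwards [hne x₀] with t htne hmem'
      exact (hKshift t x₀ (sub_ne_zero.2 htne.symm)).mul_const (deriv f t)
  -- derivative of Z and R translates
  have hZd : ∀ x₀ : ℝ, x₀ - a ≠ 0 →
      HasDerivAt (fun x => Zfun q W (x - a)) (q * W (x₀ - a)) x₀ := by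
    intro x₀ h
    exact ((hKshift a x₀ h).const_mul q).const_add 1
  have hRd : ∀ x₀ : ℝ, HasDerivAt (fun x => Rfun q psi'0 W (x - a)) (Zfun q W (x₀ - a)) x₀ := by
    intro x₀
    have hZbar : ∀ u : ℝ, HasDerivAt (Zbar q W) (Zfun q W u) u := fun u =>
      intervalIntegral.integral_hasDerivAt_right (hZcont.intervalIntegrable _ _)
        (hZcont.stronglyMeasurableAtFilter _ _) hZcont.continuousAt
    have h1 := ((hZbar (x₀ - a)).comp x₀ ((hasDerivAt_id x₀).sub_const a)).add_const (psi'0 / q)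
    simpa [Rfun, Function.comp_def] using h1
  -- evaluation of ∫ W (x-y) dy
  have hKint : ∀ x₀ : ℝ, (∫ y in a..x₀, W (x₀ - y)) = Stmt3Aux.K W (x₀ - a) := by
    intro x₀
    rw [intervalIntegral.integral_comp_sub_left (a := a) (b := x₀) W x₀, sub_self]
    rfl
  -- splitting of the phiInt with the tilde function
  have idB : ∀ x₀ : ℝ, phiInt W a x₀ (fun y => deriv f y + C_U * q)
      = (∫ t in a..x₀, W (x₀ - t) * deriv f t) + C_U * q * Stmt3Aux.K W (x₀ - a) := by
    intro x₀
    have h1 : IntervalIntegrable (fun t => W (x₀ - t) * deriv f t) volume a x₀ :=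
      (hWsii x₀ a x₀).mul_continuousOn hf'.continuousOn
    have h2 : IntervalIntegrable (fun t => W (x₀ - t) * (C_U * q)) volume a x₀ :=
      (hWsii x₀ a x₀).mul_continuousOn continuousOn_const
    have h3 : phiInt W a x₀ (fun y => deriv f y + C_U * q)
        = ∫ t in a..x₀, (W (x₀ - t) * deriv f t + W (x₀ - t) * (C_U * q)) := by
      show (∫ y in a..x₀, W (x₀ - y) * (deriv f y + C_U * q)) = _
      exact intervalIntegral.integral_congr fun t _ => by ring
    rw [h3, intervalIntegral.integral_add h1 h2, intervalIntegral.integral_mul_const, hKint x₀]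
    ring
  have idA : ∀ x₀, a ≤ x₀ → x₀ ≤ b →
      (∫ t in a..b, W (x₀ - t) * deriv f t) = ∫ t in a..x₀, W (x₀ - t) * deriv f t := by
    intro x₀ hax hxb
    have h1 : IntervalIntegrable (fun t => W (x₀ - t) * deriv f t) volume a x₀ :=
      (hWsii x₀ a x₀).mul_continuousOn hf'.continuousOn
    have h2 : IntervalIntegrable (fun t => W (x₀ - t) * deriv f t) volume x₀ b :=
      (hWsii x₀ x₀ b).mul_continuousOn hf'.continuousOn
    rw [← intervalIntegral.integral_add_adjacent_intervals h1 h2]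
    have h0 : (∫ t in x₀..b, W (x₀ - t) * deriv f t) = 0 := by
      rw [intervalIntegral.integral_of_le hxb,
        MeasureTheory.setIntegral_congr_fun measurableSet_Ioc
          (g := fun _ => (0:ℝ)) (fun t ht => by simp [hWzero _ (sub_neg.2 ht.1)])]
      simp
    rw [h0, add_zero]
  set Q : ℝ → ℝ := fun x => ∫ t in a..b, W (x - t) * (deriv f t + C_U * q) with hQdef
  have hcont' : Continuous (fun t => deriv f t + C_U * q) := hf'.add continuous_const
  have idC : ∀ x, a ≤ x → x ≤ b →
      phiInt W a x (fun y => deriv f y + C_U * q) = Q x := by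
    intro x hax hxb
    have h1 : IntervalIntegrable (fun t => W (x - t) * (deriv f t + C_U * q)) volume a x :=
      (hWsii x a x).mul_continuousOn hcont'.continuousOn
    have h2 : IntervalIntegrable (fun t => W (x - t) * (deriv f t + C_U * q)) volume x b :=
      (hWsii x x b).mul_continuousOn hcont'.continuousOn
    show phiInt W a x (fun y => deriv f y + C_U * q)
        = ∫ t in a..b, W (x - t) * (deriv f t + C_U * q)
    rw [show phiInt W a x (fun y => deriv f y + C_U * q)
        = ∫ t in a..x, W (x - t) * (deriv f t + C_U * q) from rfl,
      ← intervalIntegral.integral_add_adjacent_intervals h1 h2]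
    have h0 : (∫ t in x..b, W (x - t) * (deriv f t + C_U * q)) = 0 := by
      rw [intervalIntegral.integral_of_le hxb,
        MeasureTheory.setIntegral_congr_fun measurableSet_Ioc
          (g := fun _ => (0:ℝ)) (fun t ht => by simp [hWzero _ (sub_neg.2 ht.1)])]
      simp
    rw [h0, add_zero]
  have hQc : ∀ x₀ : ℝ, ContinuousAt Q x₀ := by
    intro x₀
    show ContinuousAt (fun x => ∫ t in a..b, W (x - t) * (deriv f t + C_U * q)) x₀
    refine intervalIntegral.continuousAt_of_dominated_interval
      (bound := fun t => W (|x₀| + 1 + |a| + |b|) * |deriv f t + C_U * q|) ?_ ?_ ?_ ?_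
    · exact Eventually.of_forall fun x =>
        ((hWmeas.comp (measurable_const.sub measurable_id)).mul
          hcont'.measurable).aestronglyMeasurable
    · filter_upwards [Metric.ball_mem_nhds x₀ one_pos] with x hx
      refine Eventually.of_forall fun t ht => ?_
      rw [Real.norm_eq_abs, abs_mul, abs_of_nonneg (hWnonneg _)]
      exact mul_le_mul_of_nonneg_right (hmono (hballmem x₀ t ht x hx)) (abs_nonneg _)
    · exact (continuous_const.mul hcont'.abs).intervalIntegrable a b
    · filter_upwards [hne x₀] with t htne hmem'
      have hW1 : ContinuousAt W (x₀ - t) :=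
        Stmt3Aux.W_contAt hWzero hWcont (sub_ne_zero.2 htne.symm)
      have h2 : ContinuousAt (fun x : ℝ => x - t) x₀ := (continuous_sub_right t).continuousAt
      exact (ContinuousAt.comp (g := W) (f := fun x : ℝ => x - t) (x := x₀) hW1 h2).mul
        continuousAt_const
  refine ⟨?_, ?_, ?_⟩
  · -- the derivative
    intro x hax hxb
    have hD : HasDerivAt (fun x' => Lam3 q C_U C_D W f a b / (q * W (b - a)) * Zfun q W (x' - a)
        - C_U * Rfun q psi'0 W (x' - a) + f a / q
        - ∫ t in a..b, Stmt3Aux.K W (x' - t) * deriv f t)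
        (Lam3 q C_U C_D W f a b / (q * W (b - a)) * (q * W (x - a))
          - C_U * Zfun q W (x - a)
          - ∫ t in a..b, W (x - t) * deriv f t) x := by
      have h1 := (hZd x (sub_ne_zero.2 hax.ne')).const_mul
        (Lam3 q C_U C_D W f a b / (q * W (b - a)))
      have h2 := (hRd x).const_mul C_U
      exact ((h1.sub h2).add_const (f a / q)).sub (hP x)
    have hev : v3 q psi'0 C_U C_D W f a b =ᶠ[𝓝 x]
        (fun x' => Lam3 q C_U C_D W f a b / (q * W (b - a)) * Zfun q W (x' - a)
          - C_U * Rfun q psi'0 W (x' - a) + f a / q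
          - ∫ t in a..b, Stmt3Aux.K W (x' - t) * deriv f t) := by
      filter_upwards [Ioo_mem_nhds hax hxb] with y hy
      have hk := key y hy.1.le hy.2.le
      show v3 q psi'0 C_U C_D W f a b y = _
      rw [v3, hk]
      have hZK : Zfun q W (y - a) = 1 + q * Stmt3Aux.K W (y - a) := rfl
      rw [hZK]
      field_simp
      ring
    have hder := hD.congr_of_eventuallyEq hev
    refine hder.congr_deriv ?_
    rw [idB x, ← idA x hax.le hxb.le]
    have hZK : Zfun q W (x - a) = 1 + q * Stmt3Aux.K W (x - a) := rfl
    rw [hZK]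
    have e1 : Lam3 q C_U C_D W f a b / (q * W (b - a)) * (q * W (x - a))
        = Lam3 q C_U C_D W f a b * W (x - a) / W (b - a) := by
      field_simp
    rw [e1]
    ring
  · -- limit at b from the left
    have hev : (fun x => Lam3 q C_U C_D W f a b * W (x - a) / W (b - a) - C_U
        - Q x) =ᶠ[𝓝[<] b]
        (fun x => Lam3 q C_U C_D W f a b * W (x - a) / W (b - a) - C_U
        - phiInt W a x (fun y => deriv f y + C_U * q)) := by
      filter_upwards [Ioo_mem_nhdsLT_of_mem (Set.mem_Ioc.2 ⟨hab, le_rfl⟩)] with y hy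
      rw [idC y hy.1.le hy.2.le]
    refine Tendsto.congr' hev ?_
    have hWb : ContinuousAt (fun x => W (x - a)) b := by
      have hW1 : ContinuousAt W (b - a) :=
        Stmt3Aux.W_contAt hWzero hWcont (sub_ne_zero.2 hab.ne')
      have h2 : ContinuousAt (fun x : ℝ => x - a) b := (continuous_sub_right a).continuousAt
      exact ContinuousAt.comp (g := W) (f := fun x : ℝ => x - a) (x := b) hW1 h2
    have hCA : ContinuousAt (fun x => Lam3 q C_U C_D W f a b * W (x - a) / W (b - a) - C_U
        - Q x) b :=
      (((continuousAt_const.mul hWb).div_const _).sub continuousAt_const).sub (hQc b)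
    have htd := hCA.tendsto.mono_left (nhdsWithin_le_nhds (s := Set.Iio b))
    have hQb : Q b = phiInt W a b (fun y => deriv f y + C_U * q) := (idC b hab.le le_rfl).symm
    have hval : Lam3 q C_U C_D W f a b * W (b - a) / W (b - a) - C_U - Q b = C_D := by
      rw [hQb]
      have h2 : Lam3 q C_U C_D W f a b * W (b - a) / W (b - a) = Lam3 q C_U C_D W f a b := by
        field_simp
      rw [h2, Lam3]
      ring
    rw [hval] at htd
    exact htd
  · -- limit at a from the right
    have hev : (fun x => Lam3 q C_U C_D W f a b * W (x - a) / W (b - a) - C_U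
        - Q x) =ᶠ[𝓝[>] a]
        (fun x => Lam3 q C_U C_D W f a b * W (x - a) / W (b - a) - C_U
        - phiInt W a x (fun y => deriv f y + C_U * q)) := by
      filter_upwards [Ioo_mem_nhdsGT_of_mem (Set.mem_Ico.2 ⟨le_rfl, hab⟩)] with y hy
      rw [idC y hy.1.le hy.2.le]
    refine Tendsto.congr' hev ?_
    have h1 : Tendsto (fun x => x - a) (𝓝[>] a) (𝓝[Set.Ici 0] 0) := by
      rw [tendsto_nhdsWithin_iff]
      constructor
      · have h2 := (continuous_sub_right (a : ℝ)).tendsto a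
        simpa using h2.mono_left nhdsWithin_le_nhds
      · filter_upwards [self_mem_nhdsWithin] with x hx
        exact le_of_lt (sub_pos.2 (Set.mem_Ioi.1 hx))
    have hWlim : Tendsto (fun x => W (x - a)) (𝓝[>] a) (𝓝 (W 0)) :=
      (hWcont 0 Set.self_mem_Ici).tendsto.comp h1
    have hQa0 : Q a = 0 := by
      show (∫ t in a..b, W (a - t) * (deriv f t + C_U * q)) = 0
      rw [intervalIntegral.integral_of_le hab.le,
        MeasureTheory.setIntegral_congr_fun measurableSet_Ioc
          (g := fun _ => (0:ℝ)) (fun t ht => by simp [hWzero _ (sub_neg.2 ht.1)])]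
      simp
    have hQa : Tendsto Q (𝓝[>] a) (𝓝 0) := by
      have h2 := (hQc a).tendsto.mono_left (nhdsWithin_le_nhds (s := Set.Ioi a))
      rwa [hQa0] at h2
    have hfinal : Tendsto (fun x => Lam3 q C_U C_D W f a b * W (x - a) / W (b - a) - C_U - Q x)
        (𝓝[>] a) (𝓝 (Lam3 q C_U C_D W f a b * W 0 / W (b - a) - C_U - 0)) :=
      (((tendsto_const_nhds.mul hWlim).div_const (W (b - a))).sub tendsto_const_nhds).sub hQa
    simpa using hfinal
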